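/- Let E be a finite set of edges, let C > 0, k a positive integer, and for each e ∈ E let C(e) = λ_e·C with λ_e ∈ [0,1] and Σ_e λ_e = k. Let the sampling probabilities satisfy p_e ≥ α/m for all e, where 0 < α ≤ m. In a single round exactly one edge R is sampled with P[R = e] = p_e, and the estimator is X = C(R)/(k·p_R). Then E[X²] ≤ (m/(α·k))·C². -/

import Mathlib

open MeasureTheory ProbabilityTheory

/-- Second-moment bound for ODeN's single-round estimator X = C(R)/(k·p_R). -/
theorem stmt3 {Ω : Type*} [MeasureSpace Ω] [IsProbabilityMeasure (ℙ : Measure Ω)]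
    {E : Type*} [Fintype E] [MeasurableSpace E] [MeasurableSingletonClass E]
    (Cv : ℝ) (hCv : 0 < Cv) (k : ℕ) (hk : 0 < k)
    (lam : E → ℝ) (hlam : ∀ e, lam e ∈ Set.Icc (0 : ℝ) 1)
    (hlamsum : ∑ e, lam e = k)
    (Cfun : E → ℝ) (hCfun : ∀ e, Cfun e = lam e * Cv)
    (p : E → ℝ) (α m : ℝ) (hα : 0 < α) (hαm : α ≤ m)
    (hp : ∀ e, α / m ≤ p e) (hpsum : ∑ e, p e = 1)
    (R : Ω → E) (hR : Measurable R)
    (hlaw : ∀ e, (ℙ {ω | R ω = e}).toReal = p e) :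
    ∫ ω, (Cfun (R ω) / (k * p (R ω))) ^ 2 ≤ m / (α * k) * Cv ^ 2 := by
  have hm : 0 < m := lt_of_lt_of_le hα hαm
  have hppos : ∀ e, 0 < p e := fun e => lt_of_lt_of_le (div_pos hα hm) (hp e)
  set g : E → ℝ := fun e => (Cfun e / (k * p e)) ^ 2 with hg
  have hmap : ∫ ω, (Cfun (R ω) / (k * p (R ω))) ^ 2 = ∫ e, g e ∂(Measure.map R ℙ) := by
    rw [integral_map hR.aemeasurable (Measurable.aestronglyMeasurable (measurable_of_countable g))]
  have : IsProbabilityMeasure (Measure.map R ℙ) := Measure.isProbabilityMeasure_map hR.aemeasurable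
  rw [hmap, integral_fintype .of_finite]
  have hmeas : ∀ e, ((Measure.map R ℙ) {e}).toReal = p e := by
    intro e
    rw [Measure.map_apply hR (measurableSet_singleton e)]
    exact hlaw e
  have hkpos : (0:ℝ) < k := Nat.cast_pos.mpr hk
  have hbound : ∀ e : E, ((Measure.map R ℙ) {e}).toReal • g e ≤ lam e * (m / (α * k^2) * Cv^2) := by
    intro e
    rw [hmeas e, smul_eq_mul, hg]
    have h0 := (hlam e).1
    have h1 := (hlam e).2
    have hpe := hppos e
    have : p e * (Cfun e / (↑k * p e)) ^ 2 = lam e ^ 2 * Cv ^ 2 / (k^2 * p e) := by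
      rw [hCfun e]; field_simp
    rw [this, div_le_iff₀ (by positivity)]
    have hinv : α ≤ m * p e := by
      have := hp e
      rw [div_le_iff₀ hm] at this
      linarith [mul_comm (p e) m]
    have hl2 : lam e ^ 2 ≤ lam e := by nlinarith
    have hkey := mul_le_mul_of_nonneg_right (mul_le_mul hl2 hinv hα.le h0) (sq_nonneg Cv)
    have heq : lam e * (m / (α * k ^ 2) * Cv ^ 2) * (↑k ^ 2 * p e)
        = lam e * (m * p e) * Cv ^ 2 / α * (k^2/k^2) := by field_simp
    rw [heq, div_self (by positivity : (0:ℝ) < (k:ℝ)^2).ne', mul_one, le_div_iff₀ hα]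
    nlinarith [hkey]

  calc ∑ e, ((Measure.map R ℙ) {e}).toReal • g e
      ≤ ∑ e, lam e * (m / (α * k^2) * Cv^2) := Finset.sum_le_sum (fun e _ => hbound e)
    _ = (∑ e, lam e) * (m / (α * k^2) * Cv^2) := by rw [Finset.sum_mul]
    _ = m / (α * k) * Cv ^ 2 := by
        rw [hlamsum]; field_simp
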